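/- There exist a bounded sequence {v_j}_{j∈ℤ}, a ρ-lacunary sequence {a_j}_{j∈ℤ} (for some ρ > 1), and a function f ∈ L^∞(ℝ) such that the maximal differential transform T* f(t) = sup_{N₁<N₂} |Σ_{j=N₁}^{N₂} v_j (P^α_{a_{j+1}} f(t) − P^α_{a_j} f(t))| equals +∞ for every t ∈ ℝ. -/

import Mathlib

section Frozen
open Real MeasureTheory Finset

/-- The one-sided fractional Poisson-type operator. -/
noncomputable def fracPoisson (α τ : ℝ) (f : ℝ → ℝ) (t : ℝ) : ℝ :=
  (1 / (4 ^ α * Real.Gamma α)) *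
    ∫ s in Set.Ioi (0:ℝ), τ ^ (2 * α) * Real.exp (-τ ^ 2 / (4 * s)) / s ^ (1 + α) * f (t - s)

end Frozen

set_option maxHeartbeats 1000000

section Aux
open Real MeasureTheory Set intervalIntegral

noncomputable def ffn (A : ℝ) (x : ℝ) : ℝ :=
  if x < 0 ∧ Even ⌊Real.logb A (-x)⌋ then (-1 : ℝ) ^ (⌊Real.logb A (-x)⌋ / 2) else 0

lemma ffn_abs_le (A x : ℝ) : |ffn A x| ≤ 1 := by
  unfold ffn
  split
  · rcases Int.even_or_odd (⌊Real.logb A (-x)⌋ / 2) with h | h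
    · rw [h.neg_one_zpow]; norm_num
    · rw [h.neg_one_zpow]; norm_num
  · simp

lemma ffn_measurable (A : ℝ) : Measurable (ffn A) := by
  have hfl : Measurable fun x : ℝ => ⌊Real.logb A (-x)⌋ := by
    apply Measurable.floor
    have : (fun x : ℝ => Real.logb A (-x)) = fun x => Real.log (-x) / Real.log A := rfl
    rw [this]
    exact (Real.measurable_log.comp measurable_neg).div_const _
  apply Measurable.ite
  · exact (measurableSet_lt measurable_id measurable_const).inter
      (hfl (by trivial : MeasurableSet {m : ℤ | Even m}))
  · exact (measurable_from_top (f := fun m : ℤ => ((-1:ℝ)) ^ (m / 2))).comp hfl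
  · exact measurable_const

lemma ffn_block {A : ℝ} (hA : 1 < A) (k : ℤ) {y : ℝ}
    (h1 : A ^ ((2*k : ℤ) : ℝ) ≤ y) (h2 : y < A ^ ((2*k+1 : ℤ) : ℝ)) :
    ffn A (-y) = (-1 : ℝ) ^ k := by
  have hA0 : 0 < A := lt_trans one_pos hA
  have hy0 : 0 < y := lt_of_lt_of_le (Real.rpow_pos_of_pos hA0 _) h1
  have hfl : ⌊Real.logb A y⌋ = 2 * k := by
    rw [Int.floor_eq_iff]
    constructor
    · calc ((2*k : ℤ) : ℝ) = Real.logb A (A ^ ((2*k:ℤ):ℝ)) := (Real.logb_rpow hA0 (ne_of_gt hA)).symm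
        _ ≤ Real.logb A y := Real.logb_le_logb_of_le hA (Real.rpow_pos_of_pos hA0 _) h1
    · calc Real.logb A y < Real.logb A (A ^ ((2*k+1:ℤ):ℝ)) := by
            apply Real.logb_lt_logb hA hy0 h2
        _ = ((2*k:ℤ):ℝ) + 1 := by rw [Real.logb_rpow hA0 (ne_of_gt hA)]; push_cast; ring
  unfold ffn
  rw [if_pos]
  · rw [neg_neg, hfl, Int.mul_ediv_cancel_left _ (by norm_num)]
  · refine ⟨by linarith, ?_⟩
    rw [neg_neg, hfl]
    exact ⟨k, by ring⟩

lemma ffn_support {A : ℝ} (hA : 1 < A) {x : ℝ} (h : ffn A x ≠ 0) :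
    ∃ k : ℤ, A ^ ((2*k : ℤ) : ℝ) ≤ -x ∧ -x < A ^ ((2*k+1 : ℤ) : ℝ) := by
  have hA0 : 0 < A := lt_trans one_pos hA
  unfold ffn at h
  rw [ne_eq, ite_eq_right_iff] at h
  push_neg at h
  obtain ⟨⟨hx0, ⟨k, hk⟩⟩, _⟩ := h
  have hx0' : (0:ℝ) < -x := by linarith
  have hm : ⌊Real.logb A (-x)⌋ = 2 * k := by omega
  have h1 : ((2*k : ℤ) : ℝ) ≤ Real.logb A (-x) := hm ▸ Int.floor_le _
  have h2 : Real.logb A (-x) < ((2*k:ℤ):ℝ) + 1 := by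
    have := Int.lt_floor_add_one (Real.logb A (-x)); rw [hm] at this; exact_mod_cast this
  refine ⟨k, ?_, ?_⟩
  · calc A ^ ((2*k:ℤ):ℝ) ≤ A ^ (Real.logb A (-x)) := Real.rpow_le_rpow_of_exponent_le (le_of_lt hA) h1
      _ = -x := Real.rpow_logb hA0 (ne_of_gt hA) hx0'
  · calc -x = A ^ (Real.logb A (-x)) := (Real.rpow_logb hA0 (ne_of_gt hA) hx0').symm
      _ < A ^ ((2*k+1:ℤ):ℝ) := by
          apply Real.rpow_lt_rpow_of_exponent_lt hA
          push_cast at h2 ⊢; linarith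


noncomputable def Kf (α τ : ℝ) (s : ℝ) : ℝ :=
  τ ^ (2 * α) * Real.exp (-τ ^ 2 / (4 * s)) / s ^ (1 + α)

lemma exp_neg_le' (x : ℝ) (hx : 0 < x) : Real.exp (-x) ≤ 4 / x ^ 2 := by
  have h1 : 1 + x/2 ≤ Real.exp (x/2) := by
    have := Real.add_one_le_exp (x/2); linarith
  have h2 : x^2/4 ≤ Real.exp x := by
    have hsq : (1 + x/2)^2 ≤ (Real.exp (x/2))^2 := by
      apply sq_le_sq' <;> nlinarith
    have he : (Real.exp (x/2))^2 = Real.exp x := by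
      rw [sq, ← Real.exp_add]; ring_nf
    nlinarith
  rw [Real.exp_neg, inv_le_iff_one_le_mul₀ (Real.exp_pos x)]
  calc (1:ℝ) = (x^2/4) * (4/x^2) := by field_simp
    _ ≤ Real.exp x * (4/x^2) := mul_le_mul_of_nonneg_right h2 (by positivity)
    _ = 4/x^2 * Real.exp x := by ring

lemma Kf_meas (α τ : ℝ) : Measurable (Kf α τ) := by
  apply Measurable.div
  · exact measurable_const.mul (Real.measurable_exp.comp
      (measurable_const.div (measurable_const.mul measurable_id)))
  · exact measurable_id.pow measurable_const

lemma Kf_nonneg {α τ : ℝ} (hτ : 0 < τ) (s : ℝ) (hs : 0 < s) : 0 ≤ Kf α τ s := by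
  unfold Kf
  have h1 : (0:ℝ) < τ ^ (2*α) := Real.rpow_pos_of_pos hτ _
  have h2 : (0:ℝ) < s ^ (1+α) := Real.rpow_pos_of_pos hs _
  positivity

lemma Kf_le_low {α τ : ℝ} (hα1 : α < 1) (hτ : 0 < τ) {s : ℝ} (hs : 0 < s) :
    Kf α τ s ≤ 64 * τ ^ (2*α - 4) * s ^ (1 - α) := by
  have hτ2 : (0:ℝ) < τ^2 := by positivity
  have he : Real.exp (-τ^2 / (4*s)) ≤ 64 * s^2 / τ^4 := by
    have h := exp_neg_le' (τ^2/(4*s)) (by positivity)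
    have : -τ^2/(4*s) = -(τ^2/(4*s)) := by ring
    rw [this]
    calc Real.exp (-(τ^2/(4*s))) ≤ 4 / (τ^2/(4*s))^2 := h
      _ = 64 * s^2 / τ^4 := by field_simp; ring
  have hτa : (0:ℝ) < τ ^ (2*α) := Real.rpow_pos_of_pos hτ _
  have hsa : (0:ℝ) < s ^ (1+α) := Real.rpow_pos_of_pos hs _
  have key : τ ^ (2*α) * (64 * s^2 / τ^4) / s ^ (1+α) = 64 * τ ^ (2*α-4) * s ^ (1-α) := by
    have e1 : τ ^ (2*α-4) = τ ^ (2*α) / τ^4 := by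
      rw [Real.rpow_sub hτ, show (4:ℝ)=((4:ℕ):ℝ) by norm_num, Real.rpow_natCast]
    have e2 : s ^ (1-α) = s^2 / s ^ (1+α) := by
      rw [show (1-α) = 2 - (1+α) by ring, Real.rpow_sub hs,
        show (2:ℝ)=((2:ℕ):ℝ) by norm_num, Real.rpow_natCast]
    rw [e1, e2]
    field_simp
  calc Kf α τ s ≤ τ ^ (2*α) * (64 * s^2 / τ^4) / s ^ (1+α) := by
        unfold Kf; gcongr
    _ = _ := key

lemma Kf_le_high {α τ : ℝ} (hτ : 0 < τ) {s : ℝ} (hs : 0 < s) :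
    Kf α τ s ≤ τ ^ (2*α) * s ^ (-(1+α)) := by
  have hτa : (0:ℝ) < τ ^ (2*α) := Real.rpow_pos_of_pos hτ _
  have hsa : (0:ℝ) < s ^ (1+α) := Real.rpow_pos_of_pos hs _
  have he : Real.exp (-τ^2 / (4*s)) ≤ 1 := by
    rw [Real.exp_le_one_iff]
    apply div_nonpos_of_nonpos_of_nonneg (neg_nonpos.2 (by positivity)) (by positivity)
  calc Kf α τ s ≤ τ ^ (2*α) * 1 / s ^ (1+α) := by unfold Kf; gcongr
    _ = τ ^ (2*α) * s ^ (-(1+α)) := by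
        rw [Real.rpow_neg (le_of_lt hs)]
        field_simp

lemma intOn_rpow_Ioc {r : ℝ} (hr : -1 < r) {M : ℝ} (hM : 0 < M) :
    IntegrableOn (fun s : ℝ => s ^ r) (Ioc 0 M) := by
  rw [← intervalIntegrable_iff_integrableOn_Ioc_of_le (le_of_lt hM)]
  exact intervalIntegral.intervalIntegrable_rpow' hr

lemma Kf_integrableOn {α τ : ℝ} (hα0 : 0 < α) (hα1 : α < 1) (hτ : 0 < τ) :
    IntegrableOn (Kf α τ) (Ioi 0) := by
  have hsplit : Ioc (0:ℝ) 1 ∪ Ioi 1 = Ioi 0 := Ioc_union_Ioi_eq_Ioi zero_le_one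
  rw [← hsplit]
  apply IntegrableOn.union
  · have hb : IntegrableOn (fun s : ℝ => 64 * τ ^ (2*α-4) * s ^ (1-α)) (Ioc 0 1) :=
      (intOn_rpow_Ioc (by linarith) one_pos).const_mul _
    apply Integrable.mono' hb ((Kf_meas α τ).aestronglyMeasurable)
    rw [ae_restrict_iff' measurableSet_Ioc]
    refine ae_of_all _ fun s hs => ?_
    rw [Real.norm_eq_abs, abs_of_nonneg (Kf_nonneg hτ s hs.1)]
    exact Kf_le_low hα1 hτ hs.1
  · have hb : IntegrableOn (fun s : ℝ => τ ^ (2*α) * s ^ (-(1+α))) (Ioi 1) :=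
      (integrableOn_Ioi_rpow_of_lt (by linarith) one_pos).const_mul _
    apply Integrable.mono' hb ((Kf_meas α τ).aestronglyMeasurable)
    rw [ae_restrict_iff' measurableSet_Ioi]
    refine ae_of_all _ fun s hs => ?_
    have hs0 : (0:ℝ) < s := lt_trans one_pos hs
    rw [Real.norm_eq_abs, abs_of_nonneg (Kf_nonneg hτ s hs0)]
    exact Kf_le_high hτ hs0

lemma Kf_int_low {α τ : ℝ} (hα0 : 0 < α) (hα1 : α < 1) (hτ : 0 < τ) {M : ℝ} (hM : 0 < M) :
    ∫ s in Ioc 0 M, Kf α τ s ≤ 64 * τ ^ (2*α-4) * M ^ (2-α) := by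
  have hb : IntegrableOn (fun s : ℝ => 64 * τ ^ (2*α-4) * s ^ (1-α)) (Ioc 0 M) :=
    (intOn_rpow_Ioc (by linarith) hM).const_mul _
  have hK : IntegrableOn (Kf α τ) (Ioc 0 M) :=
    (Kf_integrableOn hα0 hα1 hτ).mono_set Ioc_subset_Ioi_self
  calc ∫ s in Ioc 0 M, Kf α τ s
      ≤ ∫ s in Ioc 0 M, 64 * τ ^ (2*α-4) * s ^ (1-α) := by
        apply setIntegral_mono_on hK hb measurableSet_Ioc
        exact fun s hs => Kf_le_low hα1 hτ hs.1
    _ = 64 * τ ^ (2*α-4) * ∫ s in Ioc 0 M, s ^ (1-α) := by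
        rw [MeasureTheory.integral_const_mul]
    _ ≤ 64 * τ ^ (2*α-4) * M ^ (2-α) := by
        have hτp : (0:ℝ) < τ ^ (2*α-4) := Real.rpow_pos_of_pos hτ _
        have hint : ∫ s in Ioc 0 M, s ^ (1-α) = M ^ (2-α) / (2-α) := by
          rw [← integral_of_le (le_of_lt hM), integral_rpow (Or.inl (by linarith))]
          rw [Real.zero_rpow (by linarith : (1-α)+1 ≠ 0)]
          rw [show (1-α)+1 = 2-α by ring]
          ring
        rw [hint]
        have hMp : (0:ℝ) ≤ M ^ (2-α) := le_of_lt (Real.rpow_pos_of_pos hM _)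
        have : M ^ (2-α) / (2-α) ≤ M ^ (2-α) := by
          apply div_le_self hMp (by linarith)
        nlinarith

lemma Kf_int_high {α τ : ℝ} (hα0 : 0 < α) (hα1 : α < 1) (hτ : 0 < τ) {L : ℝ} (hL : 0 < L) :
    ∫ s in Ioi L, Kf α τ s ≤ τ ^ (2*α) * L ^ (-α) / α := by
  have hb : IntegrableOn (fun s : ℝ => τ ^ (2*α) * s ^ (-(1+α))) (Ioi L) :=
    (integrableOn_Ioi_rpow_of_lt (by linarith) hL).const_mul _
  have hK : IntegrableOn (Kf α τ) (Ioi L) :=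
    (Kf_integrableOn hα0 hα1 hτ).mono_set (Ioi_subset_Ioi (le_of_lt hL))
  calc ∫ s in Ioi L, Kf α τ s
      ≤ ∫ s in Ioi L, τ ^ (2*α) * s ^ (-(1+α)) := by
        apply setIntegral_mono_on hK hb measurableSet_Ioi
        exact fun s hs => Kf_le_high hτ (lt_trans hL hs)
    _ = τ ^ (2*α) * ∫ s in Ioi L, s ^ (-(1+α)) := by rw [MeasureTheory.integral_const_mul]
    _ = τ ^ (2*α) * (L ^ (-α) / α) := by
        rw [integral_Ioi_rpow_of_lt (by linarith) hL]
        rw [show -(1+α)+1 = -α by ring]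
        ring
    _ = τ ^ (2*α) * L ^ (-α) / α := by ring

lemma Kf_int_main {α τ : ℝ} (hα0 : 0 < α) (hα1 : α < 1) (hτ : 0 < τ) :
    7/72 ≤ ∫ s in Icc (2*τ^2) (3*τ^2), Kf α τ s := by
  have hτ2 : (0:ℝ) < τ^2 := by positivity
  set c : ℝ := 7/8 * τ ^ (2*α) / (3 ^ (1+α) * (τ^2) ^ (1+α)) with hc
  have hKint : IntegrableOn (Kf α τ) (Icc (2*τ^2) (3*τ^2)) :=
    (Kf_integrableOn hα0 hα1 hτ).mono_set (fun x hx => lt_of_lt_of_le (by linarith) hx.1)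
  have hlow : ∀ s ∈ Icc (2*τ^2) (3*τ^2), c ≤ Kf α τ s := by
    intro s hs
    have hs0 : (0:ℝ) < s := lt_of_lt_of_le (by linarith) hs.1
    have hexp : (7:ℝ)/8 ≤ Real.exp (-τ^2/(4*s)) := by
      have h18 : -τ^2/(4*s) ≥ -(1/8) := by
        rw [ge_iff_le, neg_le, neg_div, neg_neg]
        rw [div_le_div_iff₀ (by positivity) (by norm_num)]
        nlinarith [hs.1]
      calc (7:ℝ)/8 = -(1/8) + 1 := by norm_num
        _ ≤ Real.exp (-(1/8)) := Real.add_one_le_exp _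
        _ ≤ Real.exp (-τ^2/(4*s)) := Real.exp_le_exp.2 h18
    have hsle : s ^ (1+α) ≤ 3 ^ (1+α) * (τ^2) ^ (1+α) := by
      rw [← Real.mul_rpow (by norm_num) (le_of_lt hτ2)]
      exact Real.rpow_le_rpow (le_of_lt hs0) hs.2 (by linarith)
    have hden : (0:ℝ) < 3 ^ (1+α) * (τ^2) ^ (1+α) := by
      have := Real.rpow_pos_of_pos (show (0:ℝ) < 3 by norm_num) (1+α)
      have := Real.rpow_pos_of_pos hτ2 (1+α)
      positivity
    have hsp : (0:ℝ) < s ^ (1+α) := Real.rpow_pos_of_pos hs0 _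
    have hτp : (0:ℝ) < τ ^ (2*α) := Real.rpow_pos_of_pos hτ _
    rw [hc]
    unfold Kf
    rw [div_le_div_iff₀ hden hsp]
    calc 7/8 * τ ^ (2*α) * s ^ (1+α) ≤ 7/8 * τ ^ (2*α) * (3 ^ (1+α) * (τ^2) ^ (1+α)) := by
          apply mul_le_mul_of_nonneg_left hsle (by positivity)
      _ ≤ τ ^ (2*α) * Real.exp (-τ^2/(4*s)) * (3 ^ (1+α) * (τ^2) ^ (1+α)) := by
          apply mul_le_mul_of_nonneg_right ?_ (le_of_lt hden)
          calc 7/8 * τ ^ (2*α) = τ ^ (2*α) * (7/8) := by ring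
            _ ≤ τ ^ (2*α) * Real.exp (-τ^2/(4*s)) := by
                apply mul_le_mul_of_nonneg_left hexp (le_of_lt hτp)
  have hvol : (volume (Icc (2*τ^2) (3*τ^2))).toReal = τ^2 := by
    rw [Real.volume_Icc]
    rw [ENNReal.toReal_ofReal (by linarith)]
    ring
  have := setIntegral_ge_of_const_le (μ := volume) measurableSet_Icc
    (by rw [Real.volume_Icc]; exact ENNReal.ofReal_ne_top) hlow hKint
  rw [measureReal_def, hvol, smul_eq_mul, mul_comm] at this
  refine le_trans ?_ this
  -- 7/72 ≤ c * τ^2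
  have h3 : (3:ℝ) ^ (1+α) ≤ 9 := by
    calc (3:ℝ) ^ (1+α) ≤ 3 ^ (2:ℝ) :=
          Real.rpow_le_rpow_of_exponent_le (by norm_num) (by linarith)
      _ = 9 := by
          rw [show (2:ℝ)=((2:ℕ):ℝ) by norm_num, Real.rpow_natCast]; norm_num
  have hτ2' : (0:ℝ) < (τ^2) ^ (1+α) := Real.rpow_pos_of_pos hτ2 _
  have h3p : (0:ℝ) < 3 ^ (1+α) := Real.rpow_pos_of_pos (by norm_num) _
  have hkey : τ ^ (2*α) * τ^2 / (τ^2) ^ (1+α) = 1 := by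
    have e : (τ^2 : ℝ) = τ ^ ((2:ℝ)) := by
      rw [show (2:ℝ)=((2:ℕ):ℝ) by norm_num, Real.rpow_natCast]
    rw [e, ← Real.rpow_mul (le_of_lt hτ), ← Real.rpow_add hτ, ← Real.rpow_sub hτ,
      show 2*α + 2 - 2*(1+α) = 0 by ring, Real.rpow_zero]
  have hmul : τ ^ (2*α) * τ^2 = (τ^2) ^ (1+α) := by
    rwa [div_eq_one_iff_eq (ne_of_gt hτ2')] at hkey
  have hcval : c * τ^2 = 7/8 / 3 ^ (1+α) := by
    rw [hc]
    rw [div_mul_eq_mul_div, mul_assoc, hmul]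
    rw [div_eq_div_iff (by positivity) (by positivity)]
    ring
  rw [hcval]
  calc (7:ℝ)/72 = 7/8/9 := by norm_num
    _ ≤ 7/8 / 3 ^ (1+α) := div_le_div_of_nonneg_left (by norm_num) h3p h3

lemma key_lemma {α A : ℝ} (hα0 : 0 < α) (hα1 : α < 1) (hA : 11264 ≤ A)
    (hAα : 44 / α ≤ A ^ α) (t : ℝ) (j : ℤ) (hj : 1 ≤ j)
    (ht : |t| ≤ A ^ (2*(j:ℝ) - 1)) :
    1/22 ≤ (-1 : ℝ) ^ j * ∫ s in Ioi (0:ℝ), Kf α (A ^ (j:ℝ)) s * ffn A (t - s) := by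
  have hA1 : (1:ℝ) < A := by linarith
  have hA0 : (0:ℝ) < A := by linarith
  have hA4 : (4:ℝ) ≤ A := by linarith
  set τ := A ^ (j:ℝ) with hτdef
  set B := A ^ (2*(j:ℝ) - 1) with hBdef
  set M := 2 * B with hMdef
  set L := A ^ (2*(j:ℝ) + 1) with hLdef
  set S := Ico (t + A ^ (2*(j:ℝ))) (t + A ^ (2*(j:ℝ) + 1)) with hSdef
  set E := Ioc (0:ℝ) M ∪ Ioi L with hEdef
  set g : ℝ → ℝ := fun s => Kf α τ s * ffn A (t - s) with hgdef
  have hτ : 0 < τ := Real.rpow_pos_of_pos hA0 _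
  have hBpos : 0 < B := Real.rpow_pos_of_pos hA0 _
  -- rpow identities
  have hP : ∀ r : ℝ, A ^ (2*(j:ℝ) - 1 + r) = B * A ^ r := by
    intro r; rw [hBdef, ← Real.rpow_add hA0]
  have e2j : A ^ (2*(j:ℝ)) = B * A := by
    have h := hP 1; rw [Real.rpow_one] at h
    rw [← h]; norm_num
  have e2j1 : L = B * A^2 := by
    have h := hP 2
    rw [show 2*(j:ℝ) - 1 + 2 = 2*(j:ℝ) + 1 by ring, show (2:ℝ)=((2:ℕ):ℝ) by norm_num,
      Real.rpow_natCast] at h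
    exact h
  have e2j2 : A ^ (2*(j:ℝ) + 2) = B * A^3 := by
    have h := hP 3
    rw [show 2*(j:ℝ) - 1 + 3 = 2*(j:ℝ) + 2 by ring, show (3:ℝ)=((3:ℕ):ℝ) by norm_num,
      Real.rpow_natCast] at h
    exact h
  have eτ2 : τ^2 = B * A := by
    rw [hτdef, sq, ← Real.rpow_add hA0, ← e2j]
    ring_nf
  have htB' : -B ≤ t ∧ t ≤ B := abs_le.1 ht
  have hMpos : 0 < M := by rw [hMdef]; positivity
  have hLpos : 0 < L := Real.rpow_pos_of_pos hA0 _
  have hML : M ≤ L := by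
    rw [hMdef, e2j1]; nlinarith
  have hSsub : S ⊆ Ioi 0 := by
    intro s hs
    have h1 := hs.1
    rw [e2j] at h1
    have h2 : (0:ℝ) < t + B * A := by nlinarith [htB'.1]
    exact lt_of_lt_of_le h2 h1
  have hgmeas : Measurable g :=
    (Kf_meas α τ).mul ((ffn_measurable A).comp (measurable_const.sub measurable_id))
  have hgabs : ∀ s : ℝ, 0 < s → |g s| ≤ Kf α τ s := by
    intro s hs
    rw [hgdef]
    simp only
    rw [abs_mul, abs_of_nonneg (Kf_nonneg hτ s hs)]
    calc Kf α τ s * |ffn A (t - s)| ≤ Kf α τ s * 1 :=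
          mul_le_mul_of_nonneg_left (ffn_abs_le A _) (Kf_nonneg hτ s hs)
      _ = Kf α τ s := mul_one _
  have hgi : IntegrableOn g (Ioi 0) := by
    apply Integrable.mono' (Kf_integrableOn hα0 hα1 hτ) hgmeas.aestronglyMeasurable
    rw [ae_restrict_iff' measurableSet_Ioi]
    exact ae_of_all _ fun s hs => hgabs s hs
  have hSmeas : MeasurableSet S := measurableSet_Ico
  have hsplit : (∫ s in Ioi 0 ∩ S, g s) + (∫ s in Ioi 0 \ S, g s) = ∫ s in Ioi 0, g s :=
    integral_inter_add_diff hSmeas hgi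
  rw [inter_eq_self_of_subset_right hSsub] at hsplit
  -- value on S
  have hfS : ∀ s ∈ S, g s = Kf α τ s * (-1:ℝ)^j := by
    intro s hs
    have hy : t - s = -(s - t) := by ring
    have hblock : ffn A (t - s) = (-1:ℝ)^j := by
      rw [hy]
      apply ffn_block hA1 j
      · push_cast
        rw [show ((2:ℝ)*(j:ℝ)) = 2*(j:ℝ) by ring]
        linarith [hs.1]
      · push_cast
        rw [show ((2:ℝ)*(j:ℝ) + 1) = 2*(j:ℝ) + 1 by ring]
        linarith [hs.2]
    rw [hgdef]
    simp only
    rw [hblock]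
  have hintS : ∫ s in S, g s = (∫ s in S, Kf α τ s) * (-1:ℝ)^j := by
    rw [setIntegral_congr_fun hSmeas hfS, MeasureTheory.integral_mul_const]
  have hKS : IntegrableOn (Kf α τ) S := (Kf_integrableOn hα0 hα1 hτ).mono_set hSsub
  have hIccS : Icc (2*τ^2) (3*τ^2) ⊆ S := by
    intro s hs
    obtain ⟨hs1, hs2⟩ := hs
    rw [eτ2] at hs1 hs2
    constructor
    · rw [e2j]
      nlinarith [htB'.2]
    · rw [show t + A ^ (2*(j:ℝ) + 1) = t + B * A^2 from by rw [← e2j1]]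
      nlinarith [htB'.1, mul_pos hBpos (show (0:ℝ) < A^2 - 3*A - 1 by nlinarith)]
  have hmain : 7/72 ≤ ∫ s in S, Kf α τ s := by
    refine le_trans (Kf_int_main hα0 hα1 hτ) ?_
    apply setIntegral_mono_set hKS
    · filter_upwards [ae_restrict_mem hSmeas] with s hs
      exact Kf_nonneg hτ s (hSsub hs)
    · exact HasSubset.Subset.eventuallyLE hIccS
  have hEmeas : MeasurableSet E := measurableSet_Ioc.union measurableSet_Ioi
  have hEsub : E ⊆ Ioi 0 := by
    rintro s (hs | hs)
    · exact hs.1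
    · exact lt_trans hLpos hs
  have hKE : IntegrableOn (Kf α τ) E :=
    (Kf_integrableOn hα0 hα1 hτ).mono_set hEsub
  have hptw : ∀ s ∈ Ioi 0 \ S, |g s| ≤ E.indicator (Kf α τ) s := by
    rintro s ⟨hs0, hsS⟩
    by_cases hf0 : ffn A (t - s) = 0
    · rw [hgdef]
      simp only
      rw [hf0, mul_zero, abs_zero]
      exact Set.indicator_nonneg (fun x hx => Kf_nonneg hτ x (hEsub hx)) s
    · obtain ⟨k, hk1, hk2⟩ := ffn_support hA1 hf0
      rw [neg_sub] at hk1 hk2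
      have hsE : s ∈ E := by
        rcases lt_trichotomy k j with hkj | hkj | hkj
        · left
          refine ⟨hs0, ?_⟩
          have hle : A ^ ((2*k+1 : ℤ) : ℝ) ≤ B := by
            rw [hBdef]
            apply Real.rpow_le_rpow_of_exponent_le (le_of_lt hA1)
            push_cast
            have hc : (k:ℝ) + 1 ≤ (j:ℝ) := by exact_mod_cast Int.add_one_le_iff.2 hkj
            linarith
          have hsb : s - t < B := lt_of_lt_of_le hk2 hle
          rw [hMdef]
          linarith [htB'.2]
        · exfalso
          apply hsS
          rw [hkj] at hk1 hk2
          have hc1 : A ^ (2*(j:ℝ)) ≤ s - t := by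
            have hcast : ((2*j : ℤ) : ℝ) = 2*(j:ℝ) := by push_cast; ring
            rwa [hcast] at hk1
          have hc2 : s - t < A ^ (2*(j:ℝ) + 1) := by
            have hcast : ((2*j+1 : ℤ) : ℝ) = 2*(j:ℝ) + 1 := by push_cast; ring
            rwa [hcast] at hk2
          rw [hSdef, Set.mem_Ico]
          exact ⟨by linarith, by linarith⟩
        · right
          have hge : A ^ (2*(j:ℝ) + 2) ≤ A ^ ((2*k : ℤ) : ℝ) := by
            apply Real.rpow_le_rpow_of_exponent_le (le_of_lt hA1)
            push_cast
            have hc : (j:ℝ) + 1 ≤ (k:ℝ) := by exact_mod_cast Int.add_one_le_iff.2 hkj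
            linarith
          have h1 : B * A^3 ≤ s - t := by
            rw [← e2j2]
            exact le_trans hge hk1
          rw [Set.mem_Ioi, e2j1]
          nlinarith [htB'.1, mul_pos hBpos (show (0:ℝ) < A^3 - A^2 - 1 by nlinarith)]
      rw [Set.indicator_of_mem hsE]
      exact hgabs s hs0
  have hgiD : IntegrableOn g (Ioi 0 \ S) := hgi.mono_set diff_subset
  have hindint : Integrable (E.indicator (Kf α τ)) volume :=
    hKE.integrable_indicator hEmeas
  have hDbound : |∫ s in Ioi 0 \ S, g s|
      ≤ (∫ s in Ioc 0 M, Kf α τ s) + ∫ s in Ioi L, Kf α τ s := by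
    have h1 : |∫ s in Ioi 0 \ S, g s| ≤ ∫ s in Ioi 0 \ S, |g s| := by
      simpa [Real.norm_eq_abs] using
        norm_integral_le_integral_norm (μ := volume.restrict (Ioi 0 \ S)) g
    have h2 : ∫ s in Ioi 0 \ S, |g s| ≤ ∫ s in Ioi 0 \ S, E.indicator (Kf α τ) s :=
      setIntegral_mono_on hgiD.abs hindint.integrableOn
        (measurableSet_Ioi.diff hSmeas) hptw
    have h3 : ∫ s in Ioi 0 \ S, E.indicator (Kf α τ) s = ∫ s in (Ioi 0 \ S) ∩ E, Kf α τ s :=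
      setIntegral_indicator hEmeas
    have h4 : ∫ s in (Ioi 0 \ S) ∩ E, Kf α τ s ≤ ∫ s in E, Kf α τ s := by
      apply setIntegral_mono_set hKE
      · filter_upwards [ae_restrict_mem hEmeas] with s hs
        exact Kf_nonneg hτ s (hEsub hs)
      · exact HasSubset.Subset.eventuallyLE inter_subset_right
    have h5 : ∫ s in E, Kf α τ s = (∫ s in Ioc 0 M, Kf α τ s) + ∫ s in Ioi L, Kf α τ s := by
      rw [hEdef]
      exact setIntegral_union (Ioc_disjoint_Ioi hML) measurableSet_Ioi
        (hKE.mono_set subset_union_left) (hKE.mono_set subset_union_right)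
    linarith
  -- numeric bounds
  have hT1 : ∫ s in Ioc 0 M, Kf α τ s ≤ 1/44 := by
    refine le_trans (Kf_int_low hα0 hα1 hτ hMpos) ?_
    have hprod : τ ^ (2*α - 4) * B ^ (2-α) = A ^ (α - 2) := by
      rw [hτdef, hBdef, ← Real.rpow_mul (le_of_lt hA0), ← Real.rpow_mul (le_of_lt hA0),
        ← Real.rpow_add hA0]
      congr 1
      ring
    have hM2 : M ^ (2-α) = 2 ^ (2-α) * B ^ (2-α) := by
      rw [hMdef, Real.mul_rpow (by norm_num) (le_of_lt hBpos)]
    have h2le : (2:ℝ) ^ (2-α) ≤ 4 := by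
      calc (2:ℝ) ^ (2-α) ≤ 2 ^ (2:ℝ) :=
            Real.rpow_le_rpow_of_exponent_le (by norm_num) (by linarith)
        _ = 4 := by
            rw [show (2:ℝ)=((2:ℕ):ℝ) by norm_num, Real.rpow_natCast]; norm_num
    have hAle : A ^ (α-2) ≤ A⁻¹ := by
      calc A ^ (α-2) ≤ A ^ (-1:ℝ) :=
            Real.rpow_le_rpow_of_exponent_le (le_of_lt hA1) (by linarith)
        _ = A⁻¹ := Real.rpow_neg_one A
    have hτB : (0:ℝ) < τ ^ (2*α-4) := Real.rpow_pos_of_pos hτ _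
    have hBp : (0:ℝ) < B ^ (2-α) := Real.rpow_pos_of_pos hBpos _
    have h2p : (0:ℝ) < (2:ℝ) ^ (2-α) := Real.rpow_pos_of_pos (by norm_num) _
    calc 64 * τ ^ (2*α-4) * M ^ (2-α) = 64 * (2 ^ (2-α)) * (τ ^ (2*α-4) * B ^ (2-α)) := by
          rw [hM2]; ring
      _ = 64 * (2 ^ (2-α)) * A ^ (α-2) := by rw [hprod]
      _ ≤ 64 * 4 * A⁻¹ := by
          apply mul_le_mul (by nlinarith) hAle (le_of_lt (Real.rpow_pos_of_pos hA0 _)) (by norm_num)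
      _ ≤ 1/44 := by
          rw [show (64:ℝ)*4 = 256 by norm_num, mul_inv_le_iff₀ hA0]
          linarith
  have hT2 : ∫ s in Ioi L, Kf α τ s ≤ 1/44 := by
    refine le_trans (Kf_int_high hα0 hα1 hτ hLpos) ?_
    have hprod : τ ^ (2*α) * L ^ (-α) = A ^ (-α) := by
      rw [hτdef, hLdef, ← Real.rpow_mul (le_of_lt hA0), ← Real.rpow_mul (le_of_lt hA0),
        ← Real.rpow_add hA0]
      congr 1
      ring
    rw [hprod]
    have hApow : (0:ℝ) < A ^ α := Real.rpow_pos_of_pos hA0 _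
    have hneg : A ^ (-α) ≤ α / 44 := by
      rw [Real.rpow_neg (le_of_lt hA0), inv_le_comm₀ hApow (by positivity), inv_div]
      exact hAα
    calc A ^ (-α) / α ≤ (α/44) / α := by gcongr
      _ = 1/44 := by field_simp
  -- assembly
  have hsq : (-1:ℝ)^j * (-1:ℝ)^j = 1 := by
    rw [← zpow_add₀ (by norm_num : (-1:ℝ) ≠ 0)]
    exact Even.neg_one_zpow ⟨j, by ring⟩
  have habs : |(-1:ℝ)^j| = 1 := by
    rcases Int.even_or_odd j with h | h
    · rw [h.neg_one_zpow]; norm_num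
    · rw [h.neg_one_zpow]; norm_num
  have hDle : (-1:ℝ)^j * (∫ s in Ioi 0 \ S, g s) ≥ -(1/22) := by
    have h1 : |(-1:ℝ)^j * ∫ s in Ioi 0 \ S, g s| = |∫ s in Ioi 0 \ S, g s| := by
      rw [abs_mul, habs, one_mul]
    have h2 : |(-1:ℝ)^j * ∫ s in Ioi 0 \ S, g s| ≤ 1/22 := by
      rw [h1]; linarith
    linarith [neg_abs_le ((-1:ℝ)^j * ∫ s in Ioi 0 \ S, g s)]
  calc (1:ℝ)/22 ≤ 7/72 - 1/22 := by norm_num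
    _ ≤ (∫ s in S, Kf α τ s) + (-1:ℝ)^j * (∫ s in Ioi 0 \ S, g s) := by linarith
    _ = (-1:ℝ)^j * ((∫ s in S, g s) + ∫ s in Ioi 0 \ S, g s) := by
        rw [hintS]
        linear_combination (-(∫ s in S, Kf α τ s)) * hsq
    _ = (-1:ℝ)^j * ∫ s in Ioi 0, g s := by rw [hsplit]

end Aux

open Real MeasureTheory Finset

theorem stmt_13 (α : ℝ) (hα0 : 0 < α) (hα1 : α < 1) :
    ∃ ρ > (1:ℝ), ∃ (a v : ℤ → ℝ) (f : ℝ → ℝ),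
      (∀ j, 0 < a j) ∧ (∀ j, ρ ≤ a (j + 1) / a j) ∧
      (∃ V, ∀ j, |v j| ≤ V) ∧
      Measurable f ∧ (∃ M, ∀ t, |f t| ≤ M) ∧
      ∀ t : ℝ, ∀ R : ℝ, ∃ N₁ N₂ : ℤ, N₁ < N₂ ∧
        R < |∑ j ∈ Finset.Icc N₁ N₂,
              v j * (fracPoisson α (a (j + 1)) f t - fracPoisson α (a j) f t)| := by
  classical
  set A : ℝ := max 11264 ((44/α) ^ α⁻¹) with hAdef
  have hA : (11264:ℝ) ≤ A := le_max_left _ _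
  have hA1 : (1:ℝ) < A := by linarith
  have hA0 : (0:ℝ) < A := by linarith
  have hAα : 44 / α ≤ A ^ α := by
    have h44 : (0:ℝ) ≤ 44/α := by positivity
    calc 44/α = ((44/α) ^ α⁻¹) ^ α := (Real.rpow_inv_rpow h44 (ne_of_gt hα0)).symm
      _ ≤ A ^ α := Real.rpow_le_rpow (Real.rpow_nonneg h44 _) (le_max_right _ _) (le_of_lt hα0)
  set a : ℤ → ℝ := fun j => A ^ (j:ℝ) with hadef
  set v : ℤ → ℝ := fun j => (-1:ℝ) ^ (j+1) with hvdef
  refine ⟨A, hA1, a, v, ffn A, ?_, ?_, ⟨1, ?_⟩, ffn_measurable A, ⟨1, ffn_abs_le A⟩, ?_⟩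
  · exact fun j => Real.rpow_pos_of_pos hA0 _
  · intro j
    have h : a (j+1) / a j = A := by
      rw [hadef]
      simp only
      rw [← Real.rpow_sub hA0,
        show (((j+1):ℤ):ℝ) - ((j:ℤ):ℝ) = 1 by push_cast; ring, Real.rpow_one]
    rw [h]
  · intro j
    rw [hvdef]
    simp only
    rcases Int.even_or_odd (j+1) with h | h
    · rw [h.neg_one_zpow]; norm_num
    · rw [h.neg_one_zpow]; norm_num
  · intro t R
    -- constants
    set C : ℝ := 4 ^ α * Real.Gamma α with hCdef
    have hC : 0 < C := by
      have h1 : (0:ℝ) < 4 ^ α := Real.rpow_pos_of_pos (by norm_num) _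
      have h2 : 0 < Real.Gamma α := Real.Gamma_pos_of_pos hα0
      positivity
    set c0 : ℝ := 1/(22*C) with hc0def
    have hc0 : 0 < c0 := by positivity
    -- choose N₁
    obtain ⟨n, hn⟩ := pow_unbounded_of_one_lt |t| hA1
    set N₁ : ℤ := max 1 (n:ℤ) with hN₁def
    have hN₁1 : 1 ≤ N₁ := le_max_left _ _
    have hcond : ∀ j : ℤ, N₁ ≤ j → |t| ≤ A ^ (2*(j:ℝ) - 1) := by
      intro j hj
      have hj1 : (1:ℝ) ≤ (j:ℝ) := by exact_mod_cast le_trans hN₁1 hj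
      have hjn : (n:ℝ) ≤ (j:ℝ) := by
        have : (n:ℤ) ≤ j := le_trans (le_max_right _ _) hj
        exact_mod_cast this
      calc |t| ≤ A ^ (n:ℕ) := le_of_lt hn
        _ = A ^ ((n:ℕ):ℝ) := (Real.rpow_natCast A n).symm
        _ ≤ A ^ (2*(j:ℝ) - 1) :=
            Real.rpow_le_rpow_of_exponent_le (le_of_lt hA1) (by push_cast; linarith)
    -- choose N₂
    obtain ⟨m, hm⟩ := exists_nat_gt (R / (2*c0))
    set N₂ : ℤ := N₁ + m + 1 with hN₂def
    have hN₁₂ : N₁ < N₂ := by omega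
    refine ⟨N₁, N₂, hN₁₂, ?_⟩
    have hRm : R < (m:ℝ) * (2*c0) := by
      rw [div_lt_iff₀ (by positivity)] at hm
      linarith
    -- per-term bound
    have hterm : ∀ j ∈ Finset.Icc N₁ N₂,
        2*c0 ≤ v j * (fracPoisson α (a (j+1)) (ffn A) t - fracPoisson α (a j) (ffn A) t) := by
      intro j hj
      rw [Finset.mem_Icc] at hj
      have hj1 : 1 ≤ j := le_trans hN₁1 hj.1
      have ht0 : |t| ≤ A ^ (2*(j:ℝ) - 1) := hcond j hj.1
      have ht1 : |t| ≤ A ^ (2*((j:ℝ)+1) - 1) := by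
        refine le_trans ht0 (Real.rpow_le_rpow_of_exponent_le (le_of_lt hA1) (by linarith))
      have hkey0 : 1/22 ≤ (-1:ℝ)^j * ∫ s in Set.Ioi (0:ℝ), Kf α (A ^ (j:ℝ)) s * ffn A (t - s) :=
        key_lemma hα0 hα1 hA hAα t j hj1 ht0
      have hkey1 : 1/22 ≤ (-1:ℝ)^(j+1) *
          ∫ s in Set.Ioi (0:ℝ), Kf α (A ^ ((j:ℝ)+1)) s * ffn A (t - s) := by
        have h := key_lemma hα0 hα1 hA hAα t (j+1) (by omega)
          (by push_cast; exact ht1)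
        rw [show (((j+1):ℤ):ℝ) = (j:ℝ)+1 by push_cast; ring] at h
        exact h
      have hfrac0 : fracPoisson α (a j) (ffn A) t
          = (1/C) * ∫ s in Set.Ioi (0:ℝ), Kf α (A ^ (j:ℝ)) s * ffn A (t - s) := rfl
      have hfrac1 : fracPoisson α (a (j+1)) (ffn A) t
          = (1/C) * ∫ s in Set.Ioi (0:ℝ), Kf α (A ^ ((j:ℝ)+1)) s * ffn A (t - s) := by
        rw [show ((j:ℝ)+1) = (((j+1):ℤ):ℝ) by push_cast; ring]
        rfl
      set I0 := ∫ s in Set.Ioi (0:ℝ), Kf α (A ^ (j:ℝ)) s * ffn A (t - s) with hI0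
      set I1 := ∫ s in Set.Ioi (0:ℝ), Kf α (A ^ ((j:ℝ)+1)) s * ffn A (t - s) with hI1
      have hvj : v j = (-1:ℝ)^(j+1) := rfl
      have hneg : (-1:ℝ)^(j+1) = -((-1:ℝ)^j) := by
        rw [zpow_add₀ (by norm_num : (-1:ℝ) ≠ 0), zpow_one]
        ring
      have hexpand : v j * (fracPoisson α (a (j+1)) (ffn A) t - fracPoisson α (a j) (ffn A) t)
          = (1/C) * ((-1:ℝ)^(j+1) * I1) + (1/C) * ((-1:ℝ)^j * I0) := by
        rw [hvj, hfrac0, hfrac1, hneg]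
        ring
      rw [hexpand]
      have hCpos : (0:ℝ) < 1/C := by positivity
      have hb1 : (1/C) * (1/22) ≤ (1/C) * ((-1:ℝ)^(j+1) * I1) :=
        mul_le_mul_of_nonneg_left hkey1 (le_of_lt hCpos)
      have hb0 : (1/C) * (1/22) ≤ (1/C) * ((-1:ℝ)^j * I0) :=
        mul_le_mul_of_nonneg_left hkey0 (le_of_lt hCpos)
      have hc0eq : c0 = (1/C) * (1/22) := by
        rw [hc0def]; field_simp
      linarith
    -- sum bound
    have hcard : (Finset.Icc N₁ N₂).card = m + 2 := by
      rw [Int.card_Icc]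
      omega
    have hsum : ((m:ℝ) + 2) * (2*c0) ≤ ∑ j ∈ Finset.Icc N₁ N₂,
        v j * (fracPoisson α (a (j+1)) (ffn A) t - fracPoisson α (a j) (ffn A) t) := by
      have h := Finset.card_nsmul_le_sum (Finset.Icc N₁ N₂) _ _ hterm
      rw [hcard] at h
      rw [nsmul_eq_mul] at h
      push_cast at h
      linarith
    calc R < (m:ℝ) * (2*c0) := hRm
      _ ≤ ((m:ℝ) + 2) * (2*c0) := by nlinarith
      _ ≤ ∑ j ∈ Finset.Icc N₁ N₂,
            v j * (fracPoisson α (a (j+1)) (ffn A) t - fracPoisson α (a j) (ffn A) t) := hsum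
      _ ≤ |∑ j ∈ Finset.Icc N₁ N₂,
            v j * (fracPoisson α (a (j+1)) (ffn A) t - fracPoisson α (a j) (ffn A) t)| :=
          le_abs_self _
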